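/- Let μ be a Borel probability measure on [0,1]^d such that μ(Q_w) > 0 for every word w and μ assigns zero measure to the topological boundary of every dyadic cube Q_w. Then for all 0 < δ' < δ, limsup_{m→∞} (log₂ H_{m,δ}(μ))/m ≤ H(μ,δ'). In particular, sup_{δ>0} limsup_{m→∞} (log₂ H_{m,δ}(μ))/m ≤ dim_qA μ, so if sup_{δ>0} limsup_{m→∞} (log₂ H_{m,δ}(μ))/m = ∞ then dim_qA μ = ∞. -/

import Mathlib

open MeasureTheory Filter Set
open scoped ENNReal NNReal

/-- The alphabet `Λ = {0,1}^d`, identified with `{0,…,2^d−1}`. -/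
abbrev Lam (d : ℕ) := Fin d → Bool

/-- Finite words over the alphabet `Λ` (including the empty word). -/
abbrev Wd (d : ℕ) := List (Lam d)

/-- A word `w = w_1⋯w_m` is central if for each coordinate `i` the digit string
`(w_1(i),…,w_m(i))` equals `(0,1,1,…,1)` or `(1,0,0,…,0)`. -/
def IsCentral (d : ℕ) (w : Wd d) : Prop :=
  ∀ i : Fin d, ∃ b : Bool, w.map (fun a => a i) = b :: List.replicate (w.length - 1) (!b)

/-- The lower corner of the dyadic cube of the word `w`: `a_i = Σ_j w_j(i) 2^{−j}`. -/
noncomputable def dyadicA (d : ℕ) (w : Wd d) (i : Fin d) : ℝ :=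
  ∑ j : Fin w.length, (if w.get j i then ((2 : ℝ) ^ (j.val + 1))⁻¹ else 0)

/-- The dyadic cube `Q_w ⊆ [0,1]^d` of generation `|w|`: product of the intervals
`[a_i, a_i + 2^{−k})`, taken as `[a_i, 1]` when `a_i + 2^{−k} = 1`. -/
noncomputable def Qcube (d : ℕ) (w : Wd d) : Set (Fin d → ℝ) :=
  {y | ∀ i, dyadicA d w i ≤ y i ∧
       (y i < dyadicA d w i + ((2 : ℝ) ^ w.length)⁻¹ ∨
        (dyadicA d w i + ((2 : ℝ) ^ w.length)⁻¹ = 1 ∧ y i ≤ 1))}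

/-- The support of a measure on `ℝ^d`: points all of whose closed balls have positive measure. -/
def msupport (d : ℕ) (μ : Measure (Fin d → ℝ)) : Set (Fin d → ℝ) :=
  {x | ∀ r : ℝ, 0 < r → 0 < μ (Metric.closedBall x r)}

/-- `H(μ,δ)`: the infimum of exponents `s` admissible for the upper (quasi-)Assouad condition. -/
noncomputable def Hfun (d : ℕ) (μ : Measure (Fin d → ℝ)) (δ : ℝ) : ℝ≥0∞ :=
  ⨅ (s : ℝ) (_ : ∃ C : ℝ, 0 < C ∧ ∀ x ∈ msupport d μ, ∀ r R : ℝ,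
      0 < r → r < R ^ (1 + δ) → R ^ (1 + δ) < R → R < 1 →
      μ (Metric.closedBall x R) / μ (Metric.closedBall x r) ≤ ENNReal.ofReal (C * (R / r) ^ s)),
    ENNReal.ofReal s

/-- The upper quasi-Assouad dimension `dim_qA μ = lim_{δ→0+} H(μ,δ) = sup_{δ>0} H(μ,δ)`. -/
noncomputable def dimqA (d : ℕ) (μ : Measure (Fin d → ℝ)) : ℝ≥0∞ :=
  ⨆ (δ : ℝ) (_ : 0 < δ), Hfun d μ δ

/-- `H_{m,δ}(μ)`: max over words `ω` of length `⌊m/δ⌋` of the min over central words `w`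
of length `m` of `μ(Q_ω)/μ(Q_{ωw})`. -/
noncomputable def HmdMeas (d : ℕ) (μ : Measure (Fin d → ℝ)) (δ : ℝ) (m : ℕ) : ℝ≥0∞ :=
  ⨆ (ω : Wd d) (_ : ω.length = ⌊(m : ℝ) / δ⌋₊),
    ⨅ (w : Wd d) (_ : w.length = m ∧ IsCentral d w), μ (Qcube d ω) / μ (Qcube d (ω ++ w))

/-- Base-2 logarithm on `ℝ≥0∞` (with `log₂ ∞ = ∞`). -/
noncomputable def log2 (y : ℝ≥0∞) : ℝ≥0∞ :=
  if y = ⊤ then ⊤ else ENNReal.ofReal (Real.logb 2 y.toReal)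

-- auxiliary lemmas
lemma dyadicA_nil (d : ℕ) (i : Fin d) : dyadicA d [] i = 0 := by
  simp [dyadicA]

lemma dyadicA_cons (d : ℕ) (a : Lam d) (l : Wd d) (i : Fin d) :
    dyadicA d (a :: l) i = (if a i then (2:ℝ)⁻¹ else 0) + 2⁻¹ * dyadicA d l i := by
  unfold dyadicA
  rw [Finset.mul_sum]
  rw [show (∑ j : Fin (a :: l).length, (if (a :: l).get j i then ((2:ℝ) ^ (j.val + 1))⁻¹ else 0))
      = ∑ j : Fin (l.length + 1), (if (a :: l).get j i then ((2:ℝ) ^ (j.val + 1))⁻¹ else 0) from rfl]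
  rw [Fin.sum_univ_succ]
  congr 1
  · norm_num [List.get]
    rfl
  · refine Finset.sum_congr rfl fun j _ => ?_
    rw [show (a :: l).get (Fin.succ j) = l.get j from rfl, Fin.val_succ]
    split_ifs with h
    · rw [show j.val + 1 + 1 = (j.val + 1) + 1 from rfl, pow_succ, mul_inv, mul_comm]
    · ring

lemma dyadicA_append (d : ℕ) (u v : Wd d) (i : Fin d) :
    dyadicA d (u ++ v) i = dyadicA d u i + ((2:ℝ) ^ u.length)⁻¹ * dyadicA d v i := by
  induction u with
  | nil => simp [dyadicA_nil]
  | cons a l ih =>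
      rw [List.cons_append, dyadicA_cons, dyadicA_cons, ih, List.length_cons, pow_succ,
        mul_inv]
      ring

lemma dyadicA_replicate_true (d : ℕ) (n : ℕ) (i : Fin d) :
    dyadicA d (List.replicate n (fun _ => true)) i = 1 - ((2:ℝ) ^ n)⁻¹ := by
  induction n with
  | zero => simp [dyadicA_nil]
  | succ n ih =>
      rw [List.replicate_succ, dyadicA_cons, ih, pow_succ, mul_inv]
      norm_num
      ring

lemma dyadicA_replicate_false (d : ℕ) (n : ℕ) (i : Fin d) :
    dyadicA d (List.replicate n (fun _ => false)) i = 0 := by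
  induction n with
  | zero => simp [dyadicA_nil]
  | succ n ih => rw [List.replicate_succ, dyadicA_cons, ih]; norm_num

/-- central word with digits (0,1,1,…,1), intended length `m ≥ 1`. -/
def cw0 (d m : ℕ) : Wd d := (fun _ => false) :: List.replicate (m - 1) (fun _ => true)

/-- central word with digits (1,0,0,…,0), of length `n+1`. -/
def cw1 (d n : ℕ) : Wd d := (fun _ => true) :: List.replicate n (fun _ => false)

lemma cw0_length (d m : ℕ) (hm : 1 ≤ m) : (cw0 d m).length = m := by
  simp [cw0, Nat.sub_add_cancel hm]

lemma cw1_length (d n : ℕ) : (cw1 d n).length = n + 1 := by simp [cw1]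

lemma cw0_central (d m : ℕ) : IsCentral d (cw0 d m) := by
  intro i
  exact ⟨false, by simp [cw0, List.map_replicate]⟩

lemma dyadicA_cw0 (d m : ℕ) (hm : 1 ≤ m) (i : Fin d) :
    dyadicA d (cw0 d m) i = 2⁻¹ - ((2:ℝ) ^ m)⁻¹ := by
  obtain ⟨m', rfl⟩ : ∃ m', m = m' + 1 := ⟨m - 1, (Nat.succ_pred_eq_of_pos hm).symm⟩
  rw [cw0, dyadicA_cons, dyadicA_replicate_true]
  simp only [Nat.add_sub_cancel]
  rw [pow_succ, mul_inv]
  norm_num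
  ring

lemma dyadicA_cw1 (d n : ℕ) (i : Fin d) :
    dyadicA d (cw1 d n) i = 2⁻¹ := by
  rw [cw1, dyadicA_cons, dyadicA_replicate_false]
  norm_num

lemma Qcube_upper {d : ℕ} {w : Wd d} {y : Fin d → ℝ} (hy : y ∈ Qcube d w) (i : Fin d) :
    y i ≤ dyadicA d w i + ((2:ℝ) ^ w.length)⁻¹ := by
  rcases (hy i).2 with h | h
  · exact h.le
  · rw [h.1]; exact h.2

lemma pow_inv_mono {a b : ℕ} (h : a ≤ b) : ((2:ℝ) ^ b)⁻¹ ≤ ((2:ℝ) ^ a)⁻¹ := by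
  apply inv_anti₀ (by positivity)
  exact pow_le_pow_right₀ one_le_two h

lemma pow_inv_double (n : ℕ) : ((2:ℝ) ^ n)⁻¹ = 2 * ((2:ℝ) ^ (n+1))⁻¹ := by
  rw [pow_succ, mul_inv]
  field_simp

lemma key_estimate (d : ℕ) (μ : Measure (Fin d → ℝ)) (hpos : ∀ w : Wd d, 0 < μ (Qcube d w))
    (δ' s C : ℝ) (hδ' : 0 < δ') (hC : 0 < C)
    (hP : ∀ x ∈ msupport d μ, ∀ r R : ℝ,
      0 < r → r < R ^ (1 + δ') → R ^ (1 + δ') < R → R < 1 →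
      μ (Metric.closedBall x R) / μ (Metric.closedBall x r) ≤ ENNReal.ofReal (C * (R / r) ^ s))
    (ω : Wd d) (m : ℕ) (hm : 1 ≤ m) (hk1 : 1 ≤ ω.length)
    (hkd : (ω.length : ℝ) * δ' < m + 2) :
    μ (Qcube d ω) / μ (Qcube d (ω ++ cw0 d m)) ≤
      ENNReal.ofReal (C * ((2:ℝ) ^ (m + 2) : ℝ) ^ s) := by
  set k := ω.length with hk
  set a : Fin d → ℝ := dyadicA d ω with ha
  set x : Fin d → ℝ := fun i => a i + ((2:ℝ) ^ (k+1))⁻¹ - ((2:ℝ) ^ (k+m+1))⁻¹ with hx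
  set r : ℝ := ((2:ℝ) ^ (k+m+2))⁻¹ with hr
  set R : ℝ := ((2:ℝ) ^ k)⁻¹ with hR
  have hlen : (ω ++ cw0 d m).length = k + m := by
    rw [List.length_append, cw0_length d m hm]
  have hcval : ∀ i, dyadicA d (ω ++ cw0 d m) i
      = a i + ((2:ℝ) ^ (k+1))⁻¹ - ((2:ℝ) ^ (k+m))⁻¹ := by
    intro i
    rw [dyadicA_append, dyadicA_cw0 d m hm, ← hk, ← ha]
    have e1 : ((2:ℝ) ^ (k+1))⁻¹ = ((2:ℝ)^k)⁻¹ * 2⁻¹ := by rw [pow_succ, mul_inv]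
    have e2 : ((2:ℝ) ^ (k+m))⁻¹ = ((2:ℝ)^k)⁻¹ * ((2:ℝ)^m)⁻¹ := by rw [pow_add, mul_inv]
    rw [e1, e2]; ring
  -- x is in the support
  have hxsupp : x ∈ msupport d μ := by
    intro ρ hρ
    obtain ⟨n, hn⟩ : ∃ n : ℕ, ((2:ℝ)⁻¹) ^ n < ρ :=
      exists_pow_lt_of_lt_one hρ (by norm_num)
    have hn' : ((2:ℝ) ^ n)⁻¹ < ρ := by rwa [← inv_pow]
    set u : Wd d := ω ++ cw0 d m ++ cw1 d n with hu
    have hulen : u.length = k + m + (n + 1) := by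
      rw [hu, List.length_append, hlen, cw1_length]
    have hucorner : ∀ i, dyadicA d u i = x i := by
      intro i
      rw [hu, dyadicA_append, dyadicA_cw1, hlen, hcval, hx]
      have := pow_inv_double (k+m)
      have e2 : ((2:ℝ) ^ (k+m))⁻¹ * 2⁻¹ = ((2:ℝ) ^ (k+m+1))⁻¹ := by
        rw [pow_succ, mul_inv]
      rw [e2]
      ring
    have hsub : Qcube d u ⊆ Metric.closedBall x ρ := by
      intro y hy
      rw [Metric.mem_closedBall, dist_pi_le_iff hρ.le]
      intro i
      have h1 : x i ≤ y i := by
        have := (hy i).1; rwa [hucorner i] at this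
      have h2 : y i ≤ x i + ((2:ℝ) ^ u.length)⁻¹ := by
        have := Qcube_upper hy i; rwa [hucorner i] at this
      have h3 : ((2:ℝ) ^ u.length)⁻¹ ≤ ((2:ℝ) ^ n)⁻¹ := by
        apply pow_inv_mono; omega
      rw [Real.dist_eq, abs_le]
      constructor
      · linarith
      · calc y i - x i ≤ ((2:ℝ) ^ u.length)⁻¹ := by linarith
          _ ≤ ((2:ℝ)^n)⁻¹ := h3
          _ ≤ ρ := hn'.le
    exact (hpos u).trans_le (measure_mono hsub)
  -- the big cube is in the ball of radius R
  have hQR : Qcube d ω ⊆ Metric.closedBall x R := by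
    intro y hy
    have hRpos : (0:ℝ) ≤ R := by positivity
    rw [Metric.mem_closedBall, dist_pi_le_iff hRpos]
    intro i
    have h1 : a i ≤ y i := (hy i).1
    have h2 : y i ≤ a i + ((2:ℝ) ^ k)⁻¹ := Qcube_upper hy i
    have d1 := pow_inv_double k        -- (2^k)⁻¹ = 2*(2^(k+1))⁻¹
    have d2 : ((2:ℝ) ^ (k+m+1))⁻¹ ≤ ((2:ℝ) ^ (k+1))⁻¹ := pow_inv_mono (by omega)
    have d3 : (0:ℝ) < ((2:ℝ) ^ (k+m+1))⁻¹ := by positivity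
    rw [Real.dist_eq, abs_le, hx]
    constructor <;> [skip; skip] <;> simp only [hR] <;> nlinarith
  -- the ball of radius r is in the small cube
  have hrQ : Metric.closedBall x r ⊆ Qcube d (ω ++ cw0 d m) := by
    intro y hy
    rw [Metric.mem_closedBall] at hy
    intro i
    have hi : |y i - x i| ≤ r := by
      rw [← Real.dist_eq]
      exact (dist_le_pi_dist y x i).trans hy
    rw [abs_le] at hi
    have d1 := pow_inv_double (k+m)       -- (2^(k+m))⁻¹ = 2*(2^(k+m+1))⁻¹
    have d2 := pow_inv_double (k+m+1)     -- (2^(k+m+1))⁻¹ = 2*(2^(k+m+2))⁻¹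
    have d3 : (0:ℝ) < ((2:ℝ) ^ (k+m+2))⁻¹ := by positivity
    refine ⟨?_, Or.inl ?_⟩
    · rw [hcval]; simp only [hx, hr] at hi ⊢; nlinarith
    · rw [hcval, hlen]; simp only [hx, hr] at hi ⊢; nlinarith
  -- radius conditions
  have h2lt : (1:ℝ) < 2 := one_lt_two
  have hRe : R = (2:ℝ) ^ (-(k:ℝ)) := by
    rw [Real.rpow_neg (by norm_num), Real.rpow_natCast]
  have hre : r = (2:ℝ) ^ (-((k:ℝ)+m+2)) := by
    rw [hr, show -((k:ℝ)+m+2) = -(((k+m+2 : ℕ) : ℝ)) by push_cast; ring,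
      Real.rpow_neg (by norm_num), Real.rpow_natCast]
  have hRp : R ^ (1+δ') = (2:ℝ) ^ (-(k:ℝ) * (1+δ')) := by
    rw [hRe, ← Real.rpow_mul (by norm_num : (0:ℝ) ≤ 2)]
  have hrpos : 0 < r := by positivity
  have hrR : r < R ^ (1 + δ') := by
    rw [hre, hRp]
    rw [Real.rpow_lt_rpow_left_iff h2lt]
    ring_nf
    nlinarith [hkd]
  have hRR : R ^ (1 + δ') < R := by
    rw [hre] at *
    rw [hRp, hRe, Real.rpow_lt_rpow_left_iff h2lt]
    have : (1:ℝ) ≤ (k:ℝ) := by exact_mod_cast hk1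
    nlinarith
  have hR1 : R < 1 := by
    rw [hRe]
    apply Real.rpow_lt_one_of_one_lt_of_neg h2lt
    have : (1:ℝ) ≤ (k:ℝ) := by exact_mod_cast hk1
    linarith
  have hmain := hP x hxsupp r R hrpos hrR hRR hR1
  have hRr : R / r = (2:ℝ) ^ (m + 2) := by
    rw [hR, hr, div_eq_mul_inv, inv_inv, show k + m + 2 = k + (m + 2) from by ring, pow_add]
    have h2k : ((2:ℝ) ^ k) ≠ 0 := by positivity
    field_simp
  rw [hRr] at hmain
  refine le_trans (ENNReal.div_le_div ?_ ?_) hmain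
  · exact measure_mono hQR
  · exact measure_mono hrQ

lemma log2_le_of_le {y : ℝ≥0∞} {A : ℝ} (hA : 1 ≤ A) (h : y ≤ ENNReal.ofReal A) :
    log2 y ≤ ENNReal.ofReal (Real.logb 2 A) := by
  have hy : y ≠ ⊤ := ne_top_of_le_ne_top ENNReal.ofReal_ne_top h
  rw [log2, if_neg hy]
  apply ENNReal.ofReal_le_ofReal
  have h0 : y.toReal ≤ A := by
    have h1 := ENNReal.toReal_mono ENNReal.ofReal_ne_top h
    rwa [ENNReal.toReal_ofReal (by linarith)] at h1
  rcases eq_or_lt_of_le (ENNReal.toReal_nonneg : 0 ≤ y.toReal) with h1 | h1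
  · rw [← h1, Real.logb_zero]
    exact Real.logb_nonneg one_lt_two hA
  · exact Real.logb_le_logb_of_le one_lt_two h1 h0

lemma part1 (d : ℕ) (μ : Measure (Fin d → ℝ)) (hpos : ∀ w : Wd d, 0 < μ (Qcube d w))
    (δ' δ : ℝ) (h1 : 0 < δ') (h2 : δ' < δ) :
    Filter.limsup (fun m : ℕ => log2 (HmdMeas d μ δ m) / (m : ℝ≥0∞)) Filter.atTop ≤
      Hfun d μ δ' := by
  have hδ : 0 < δ := h1.trans h2
  rw [Hfun]
  refine le_iInf fun s => le_iInf fun hs => ?_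
  obtain ⟨C, hC, hP⟩ := hs
  set t := max s 0 with ht
  have hts : ENNReal.ofReal s = ENNReal.ofReal t := by
    rcases le_total s 0 with h | h
    · rw [ENNReal.ofReal_eq_zero.mpr h, ht, max_eq_right h, ENNReal.ofReal_zero]
    · rw [ht, max_eq_left h]
  rw [hts]
  set L := Real.logb 2 (max C 1) with hL
  have hL0 : 0 ≤ L := Real.logb_nonneg one_lt_two (le_max_right _ _)
  have ht0 : 0 ≤ t := le_max_right _ _
  have hst : s ≤ t := le_max_left _ _
  refine ENNReal.le_of_forall_pos_le_add fun ε hε _ => ?_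
  have hεR : (0:ℝ) < (ε:ℝ) := by exact_mod_cast hε
  refine Filter.limsup_le_of_le (by isBoundedDefault) ?_
  obtain ⟨N2, hN2⟩ := exists_nat_ge δ
  obtain ⟨N3, hN3⟩ := exists_nat_ge ((L + 2*t)/(ε:ℝ))
  filter_upwards [Filter.eventually_ge_atTop 1, Filter.eventually_ge_atTop N2,
    Filter.eventually_ge_atTop N3] with m hm1 hm2 hm3
  have hm0 : (0:ℝ) < (m:ℝ) := by exact_mod_cast hm1
  set k := ⌊(m:ℝ)/δ⌋₊ with hkdef
  have hk1 : 1 ≤ k := by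
    apply Nat.le_floor
    rw [Nat.cast_one, le_div_iff₀ hδ, one_mul]
    calc δ ≤ (N2:ℝ) := hN2
      _ ≤ (m:ℝ) := by exact_mod_cast hm2
  have hkm : (k:ℝ) ≤ (m:ℝ)/δ := Nat.floor_le (by positivity)
  have hkd : (k:ℝ) * δ' < (m:ℝ) + 2 := by
    have e1 : (k:ℝ) * δ' ≤ ((m:ℝ)/δ) * δ' := by
      apply mul_le_mul_of_nonneg_right hkm h1.le
    have e2 : ((m:ℝ)/δ) * δ' ≤ (m:ℝ) := by
      rw [div_mul_eq_mul_div, div_le_iff₀ hδ]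
      nlinarith
    linarith
  -- bound on HmdMeas
  have hH : HmdMeas d μ δ m ≤ ENNReal.ofReal (C * ((2:ℝ) ^ (m+2) : ℝ) ^ s) := by
    rw [HmdMeas]
    refine iSup₂_le fun ω hω => ?_
    refine le_trans (iInf₂_le (cw0 d m) ⟨cw0_length d m hm1, cw0_central d m⟩) ?_
    exact key_estimate d μ hpos δ' s C h1 hC hP ω m hm1 (by rw [hω]; exact hk1)
      (by rw [hω]; exact hkd)
  have hbase : (1:ℝ) ≤ (2:ℝ) ^ (m+2) := one_le_pow₀ (by norm_num : (1:ℝ) ≤ 2)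
  have hA' : C * ((2:ℝ) ^ (m+2) : ℝ) ^ s ≤ (max C 1) * ((2:ℝ) ^ (m+2) : ℝ) ^ t := by
    apply mul_le_mul (le_max_left _ _) (Real.rpow_le_rpow_of_exponent_le hbase hst)
      (by positivity) (by positivity)
  have hA1 : (1:ℝ) ≤ (max C 1) * ((2:ℝ) ^ (m+2) : ℝ) ^ t := by
    have e1 : (1:ℝ) ≤ max C 1 := le_max_right _ _
    have e2 : (1:ℝ) ≤ ((2:ℝ) ^ (m+2) : ℝ) ^ t := by
      rw [show (1:ℝ) = ((2:ℝ) ^ (m+2) : ℝ) ^ (0:ℝ) from (Real.rpow_zero _).symm]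
      exact Real.rpow_le_rpow_of_exponent_le hbase ht0
    nlinarith
  have hlogA : Real.logb 2 ((max C 1) * ((2:ℝ) ^ (m+2) : ℝ) ^ t) = L + ((m:ℝ)+2)*t := by
    rw [Real.logb_mul (by positivity) (by positivity), hL]
    congr 1
    rw [Real.logb_rpow_eq_mul_logb_of_pos (by positivity), Real.logb_pow,
      Real.logb_self_eq_one (by norm_num)]
    push_cast
    ring
  have hlog : log2 (HmdMeas d μ δ m) ≤ ENNReal.ofReal (L + ((m:ℝ)+2)*t) := by
    rw [← hlogA]
    exact log2_le_of_le hA1 (hH.trans (ENNReal.ofReal_le_ofReal hA'))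
  calc log2 (HmdMeas d μ δ m) / (m : ℝ≥0∞)
      ≤ ENNReal.ofReal (L + ((m:ℝ)+2)*t) / (m : ℝ≥0∞) := ENNReal.div_le_div_right hlog _
    _ = ENNReal.ofReal ((L + ((m:ℝ)+2)*t) / (m:ℝ)) := by
        rw [ENNReal.ofReal_div_of_pos hm0, ENNReal.ofReal_natCast]
    _ ≤ ENNReal.ofReal (t + (ε:ℝ)) := by
        apply ENNReal.ofReal_le_ofReal
        rw [div_le_iff₀ hm0]
        have e1 : L + 2*t ≤ (ε:ℝ) * (m:ℝ) := by
          have e2 : (L + 2*t)/(ε:ℝ) ≤ (m:ℝ) := by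
            calc (L + 2*t)/(ε:ℝ) ≤ (N3:ℝ) := hN3
              _ ≤ (m:ℝ) := by exact_mod_cast hm3
          rw [div_le_iff₀ hεR] at e2; linarith
        nlinarith
    _ = ENNReal.ofReal t + ε := by
        rw [ENNReal.ofReal_add ht0 hεR.le, ENNReal.ofReal_coe_nnreal]


/-- For a Borel probability measure `μ` on `[0,1]^d` giving positive mass to
every dyadic cube and zero mass to all their boundaries: for all `0 < δ' < δ`,
`limsup_m (log₂ H_{m,δ}(μ))/m ≤ H(μ,δ')`; in particular
`sup_{δ>0} limsup_m (log₂ H_{m,δ}(μ))/m ≤ dim_qA μ`, so if the left side is `∞` then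
`dim_qA μ = ∞`. -/
theorem stmt9 (d : ℕ) (hd : 1 ≤ d) (μ : Measure (Fin d → ℝ)) [IsProbabilityMeasure μ]
    (hsupp : μ (Set.Icc (0 : Fin d → ℝ) 1)ᶜ = 0)
    (hpos : ∀ w : Wd d, 0 < μ (Qcube d w))
    (hbdry : ∀ w : Wd d, μ (frontier (Qcube d w)) = 0) :
    (∀ δ' δ : ℝ, 0 < δ' → δ' < δ →
      Filter.limsup (fun m : ℕ => log2 (HmdMeas d μ δ m) / (m : ℝ≥0∞)) Filter.atTop ≤
        Hfun d μ δ') ∧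
    (⨆ (δ : ℝ) (_ : 0 < δ),
      Filter.limsup (fun m : ℕ => log2 (HmdMeas d μ δ m) / (m : ℝ≥0∞)) Filter.atTop) ≤
      dimqA d μ ∧
    ((⨆ (δ : ℝ) (_ : 0 < δ),
      Filter.limsup (fun m : ℕ => log2 (HmdMeas d μ δ m) / (m : ℝ≥0∞)) Filter.atTop) = ⊤ →
      dimqA d μ = ⊤) := by

  have P1 : ∀ δ' δ : ℝ, 0 < δ' → δ' < δ →
      Filter.limsup (fun m : ℕ => log2 (HmdMeas d μ δ m) / (m : ℝ≥0∞)) Filter.atTop ≤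
        Hfun d μ δ' := fun δ' δ h1 h2 => part1 d μ hpos δ' δ h1 h2
  have P2 : (⨆ (δ : ℝ) (_ : 0 < δ),
      Filter.limsup (fun m : ℕ => log2 (HmdMeas d μ δ m) / (m : ℝ≥0∞)) Filter.atTop) ≤
      dimqA d μ := by
    refine iSup₂_le fun δ hδ => ?_
    refine le_trans (P1 (δ/2) δ (by linarith) (by linarith)) ?_
    rw [dimqA]
    exact le_iSup₂ (f := fun δ'' (_ : 0 < δ'') => Hfun d μ δ'') (δ/2) (by linarith)
  exact ⟨P1, P2, fun h => top_le_iff.mp (h ▸ P2)⟩
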